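/- Let n ≥ 2 be an integer and let n′ > 0 be a real number with n′ ≥ 3·ln(2n²). Let X be a random variable with the Poisson distribution of mean n′. Then P( n′ − √(3·n′·ln(2n²)) ≤ X ≤ n′ + √(3·n′·ln(2n²)) ) ≥ 1 − 1/n². -/

import Mathlib

open MeasureTheory

lemma sum_pow_div_factorial' (x : ℝ) :
    HasSum (fun k : ℕ ↦ x ^ k / k.factorial) (Real.exp x) := by
  rw [Real.exp_eq_exp_ℝ]
  exact NormedSpace.expSeries_div_hasSum_exp x

lemma exp_quad {u : ℝ} (h : |u| ≤ 1) : Real.exp u ≤ 1 + u + 3/4 * u^2 := by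
  have h2 := Real.exp_bound h (n := 2) (by norm_num)
  have h3 := (abs_sub_le_iff.mp h2).1
  simp [Finset.sum_range_succ, Nat.factorial] at h3
  nlinarith [sq_abs u]

lemma chernoff (μ : ℝ) (hμ : 0 ≤ μ) (s a : ℝ) (S : Set ℕ)
    (hS : ∀ k ∈ S, s * a ≤ s * k) :
    ∑' k : S, (Real.exp (-μ) * μ ^ (k : ℕ) / ((k : ℕ).factorial : ℝ))
      ≤ Real.exp (μ * (Real.exp s - 1) - s * a) := by
  have hq : HasSum (fun k : ℕ ↦ Real.exp (-μ - s*a) * ((μ * Real.exp s) ^ k / k.factorial))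
      (Real.exp (-μ - s*a) * Real.exp (μ * Real.exp s)) :=
    (sum_pow_div_factorial' _).mul_left _
  have heq : ∀ k : ℕ, Real.exp (-μ - s*a) * ((μ * Real.exp s) ^ k / k.factorial)
      = (Real.exp (-μ) * μ ^ k / k.factorial) * Real.exp (s * k - s * a) := by
    intro k
    have e1 : Real.exp s ^ k = Real.exp (s * k) := by
      rw [← Real.exp_nat_mul, mul_comm]
    have e2 : Real.exp (-μ - s*a) * Real.exp (s * k)
        = Real.exp (-μ) * Real.exp (s * k - s * a) := by
      rw [← Real.exp_add, ← Real.exp_add]; ring_nf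
    calc Real.exp (-μ - s*a) * ((μ * Real.exp s) ^ k / k.factorial)
        = (Real.exp (-μ - s*a) * Real.exp (s * k)) * μ ^ k / k.factorial := by
          rw [mul_pow, e1]; ring
      _ = (Real.exp (-μ) * Real.exp (s * k - s * a)) * μ ^ k / k.factorial := by rw [e2]
      _ = (Real.exp (-μ) * μ ^ k / k.factorial) * Real.exp (s * k - s * a) := by ring
  have hq2 : HasSum (fun k : ℕ ↦ (Real.exp (-μ) * μ ^ k / k.factorial) * Real.exp (s * k - s * a))
      (Real.exp (-μ - s*a) * Real.exp (μ * Real.exp s)) := by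
    simpa only [heq] using hq
  have hval : Real.exp (-μ - s*a) * Real.exp (μ * Real.exp s)
      = Real.exp (μ * (Real.exp s - 1) - s * a) := by
    rw [← Real.exp_add]; ring_nf
  have hps : Summable (fun k : ℕ ↦ Real.exp (-μ) * μ ^ k / k.factorial) := by
    simpa [mul_div_assoc] using ((sum_pow_div_factorial' μ).summable.mul_left (Real.exp (-μ)))
  calc ∑' k : S, (Real.exp (-μ) * μ ^ (k : ℕ) / ((k : ℕ).factorial : ℝ))
      ≤ ∑' k : S, (Real.exp (-μ) * μ ^ (k : ℕ) / ((k : ℕ).factorial : ℝ))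
          * Real.exp (s * (k : ℕ) - s * a) := by
        apply Summable.tsum_le_tsum _ (hps.subtype _) (hq2.summable.subtype _)
        intro k
        apply le_mul_of_one_le_right
          (div_nonneg (mul_nonneg (Real.exp_nonneg _) (pow_nonneg hμ _)) (Nat.cast_nonneg _))
        rw [← Real.exp_zero]
        exact Real.exp_le_exp.mpr (by have := hS k k.2; linarith)
    _ ≤ ∑' k : ℕ, (Real.exp (-μ) * μ ^ k / k.factorial) * Real.exp (s * k - s * a) :=
        Summable.tsum_subtype_le _ _ (fun k ↦ mul_nonneg (div_nonneg (mul_nonneg (Real.exp_nonneg _) (pow_nonneg hμ _)) (Nat.cast_nonneg _)) (Real.exp_nonneg _)) hq2.summable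
    _ = Real.exp (μ * (Real.exp s - 1) - s * a) := by rw [hq2.tsum_eq, hval]

/-- Let `n ≥ 2` be an integer and let `n′ > 0` be a real number with
`n′ ≥ 3·ln(2n²)`. Let `X` be a random variable with the Poisson distribution of mean `n′`
(i.e. `P(X = k) = e^{−n′}·n′^k / k!` for every `k ∈ ℕ`). Then
`P( n′ − √(3·n′·ln(2n²)) ≤ X ≤ n′ + √(3·n′·ln(2n²)) ) ≥ 1 − 1/n²`. -/
theorem stmt5 {Ω : Type*} [MeasurableSpace Ω] (P : Measure Ω) [IsProbabilityMeasure P]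
    (n : ℕ) (hn : 2 ≤ n) (n' : ℝ) (hn'0 : 0 < n')
    (hn' : 3 * Real.log (2 * (n : ℝ) ^ 2) ≤ n')
    (X : Ω → ℕ)
    (hX : ∀ k : ℕ, P {ω | X ω = k}
        = ENNReal.ofReal (Real.exp (-n') * n' ^ k / (Nat.factorial k))) :
    ENNReal.ofReal (1 - 1 / (n : ℝ) ^ 2)
      ≤ P {ω | n' - Real.sqrt (3 * n' * Real.log (2 * (n : ℝ) ^ 2)) ≤ (X ω : ℝ)
            ∧ (X ω : ℝ) ≤ n' + Real.sqrt (3 * n' * Real.log (2 * (n : ℝ) ^ 2))} := by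
  have hn2 : (2:ℝ) ≤ (n:ℝ) := by exact_mod_cast hn
  set L : ℝ := Real.log (2 * (n : ℝ) ^ 2) with hLdef
  have hL : 0 < L := Real.log_pos (by nlinarith)
  set t : ℝ := Real.sqrt (3 * n' * L) with htdef
  have ht0 : 0 ≤ t := Real.sqrt_nonneg _
  have ht2 : t ^ 2 = 3 * n' * L := Real.sq_sqrt (by positivity)
  have htle : t ≤ n' := by
    have h1 : 3 * n' * L ≤ n' * n' := by nlinarith
    calc t ≤ Real.sqrt (n' * n') := Real.sqrt_le_sqrt h1
      _ = n' := Real.sqrt_mul_self hn'0.le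
  set s : ℝ := 2 * t / (3 * n') with hsdef
  have hs0 : 0 ≤ s := by positivity
  have hs1 : s ≤ 1 := by
    rw [hsdef, div_le_one (by positivity)]; linarith
  have hst : s * t = 2 * L := by
    rw [hsdef]; field_simp; linear_combination ht2
  have h34 : 3/4 * (n' * s ^ 2) = L := by
    rw [hsdef]; field_simp; linear_combination 4 * ht2
  have hexp1 : Real.exp s ≤ 1 + s + 3/4 * s^2 := exp_quad (by rw [abs_of_nonneg hs0]; exact hs1)
  have hexp2 : Real.exp (-s) ≤ 1 + (-s) + 3/4 * (-s)^2 := exp_quad (by rw [abs_neg, abs_of_nonneg hs0]; exact hs1)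
  -- the two tail exponents
  have hup : n' * (Real.exp s - 1) - s * (n' + t) ≤ -L := by
    nlinarith [mul_le_mul_of_nonneg_left hexp1 hn'0.le]
  have hlo : n' * (Real.exp (-s) - 1) - (-s) * (n' - t) ≤ -L := by
    nlinarith [mul_le_mul_of_nonneg_left hexp2 hn'0.le]
  -- tail sets
  set S₁ : Set ℕ := {k : ℕ | (k : ℝ) < n' - t} with hS₁def
  set S₂ : Set ℕ := {k : ℕ | n' + t < (k : ℝ)} with hS₂def
  have hcher1 : ∑' k : S₁, (Real.exp (-n') * n' ^ (k : ℕ) / ((k : ℕ).factorial : ℝ))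
      ≤ Real.exp (-L) := by
    refine le_trans (chernoff n' hn'0.le (-s) (n' - t) S₁ ?_) (Real.exp_le_exp.mpr hlo)
    intro k hk
    have : (k:ℝ) ≤ n' - t := le_of_lt hk
    nlinarith
  have hcher2 : ∑' k : S₂, (Real.exp (-n') * n' ^ (k : ℕ) / ((k : ℕ).factorial : ℝ))
      ≤ Real.exp (-L) := by
    refine le_trans (chernoff n' hn'0.le s (n' + t) S₂ ?_) (Real.exp_le_exp.mpr hup)
    intro k hk
    have : n' + t ≤ (k:ℝ) := le_of_lt hk
    nlinarith
  -- summability and nonnegativity of pmf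
  have hps : Summable (fun k : ℕ ↦ Real.exp (-n') * n' ^ k / k.factorial) := by
    simpa [mul_div_assoc] using ((sum_pow_div_factorial' n').summable.mul_left (Real.exp (-n')))
  have hpnn : ∀ k : ℕ, 0 ≤ Real.exp (-n') * n' ^ k / k.factorial :=
    fun k ↦ div_nonneg (mul_nonneg (Real.exp_nonneg _) (pow_nonneg hn'0.le _)) (Nat.cast_nonneg _)
  -- measure bound for each tail
  have hmeas : ∀ S : Set ℕ,
      P {ω | X ω ∈ S} ≤ ENNReal.ofReal (∑' k : S, (Real.exp (-n') * n' ^ (k:ℕ) / ((k:ℕ).factorial : ℝ))) := by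
    intro S
    have hsub : {ω | X ω ∈ S} ⊆ ⋃ k : S, {ω | X ω = (k : ℕ)} := by
      intro ω hω
      exact Set.mem_iUnion.mpr ⟨⟨X ω, hω⟩, rfl⟩
    calc P {ω | X ω ∈ S} ≤ P (⋃ k : S, {ω | X ω = (k : ℕ)}) := measure_mono hsub
      _ ≤ ∑' k : S, P {ω | X ω = (k : ℕ)} := measure_iUnion_le _
      _ = ∑' k : S, ENNReal.ofReal (Real.exp (-n') * n' ^ (k:ℕ) / ((k:ℕ).factorial : ℝ)) := by
          simp only [hX]
      _ = ENNReal.ofReal (∑' k : S, (Real.exp (-n') * n' ^ (k:ℕ) / ((k:ℕ).factorial : ℝ))) :=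
          (ENNReal.ofReal_tsum_of_nonneg (fun k ↦ hpnn _) (hps.subtype _)).symm
  -- complement bound
  set A : Set Ω := {ω | n' - t ≤ (X ω : ℝ) ∧ (X ω : ℝ) ≤ n' + t} with hAdef
  have hAc : Aᶜ ⊆ {ω | X ω ∈ S₁} ∪ {ω | X ω ∈ S₂} := by
    intro ω hω
    simp only [hAdef, Set.mem_compl_iff, Set.mem_setOf_eq, not_and_or, not_le] at hω
    rcases hω with h | h
    · exact Or.inl h
    · exact Or.inr h
  have hAcle : P Aᶜ ≤ ENNReal.ofReal (1 / (n:ℝ)^2) := by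
    have h1 : P Aᶜ ≤ P {ω | X ω ∈ S₁} + P {ω | X ω ∈ S₂} :=
      le_trans (measure_mono hAc) (measure_union_le _ _)
    have h2 : P {ω | X ω ∈ S₁} ≤ ENNReal.ofReal (Real.exp (-L)) :=
      le_trans (hmeas S₁) (ENNReal.ofReal_le_ofReal hcher1)
    have h3 : P {ω | X ω ∈ S₂} ≤ ENNReal.ofReal (Real.exp (-L)) :=
      le_trans (hmeas S₂) (ENNReal.ofReal_le_ofReal hcher2)
    have hEL : Real.exp (-L) + Real.exp (-L) = 1 / (n:ℝ)^2 := by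
      rw [Real.exp_neg, hLdef, Real.exp_log (by positivity)]
      field_simp
      norm_num
    calc P Aᶜ ≤ ENNReal.ofReal (Real.exp (-L)) + ENNReal.ofReal (Real.exp (-L)) :=
          le_trans h1 (add_le_add h2 h3)
      _ = ENNReal.ofReal (Real.exp (-L) + Real.exp (-L)) :=
          (ENNReal.ofReal_add (Real.exp_nonneg _) (Real.exp_nonneg _)).symm
      _ = ENNReal.ofReal (1 / (n:ℝ)^2) := by rw [hEL]
  -- conclude
  have hone : (1 : ENNReal) ≤ P A + P Aᶜ := by
    rw [← measure_univ (μ := P)]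
    rw [← Set.union_compl_self A]
    exact measure_union_le _ _
  have : ENNReal.ofReal (1 - 1 / (n:ℝ)^2) = 1 - ENNReal.ofReal (1 / (n:ℝ)^2) := by
    rw [ENNReal.ofReal_sub _ (by positivity), ENNReal.ofReal_one]
  rw [this]
  rw [tsub_le_iff_right]
  exact le_trans hone (add_le_add_right hAcle _)
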